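/- Let G = (L ⊔ R, E) be a bipartite graph constructed from a directed graph H = (V_H, E_H) with designated vertices s, t ∈ V_H (s having no incoming edges, t no outgoing edges) as follows: for each v ∈ V_H \ {s,t} there are vertices v^ℓ ∈ L and v^r ∈ R joined by an edge; additionally s^ℓ ∈ L and t^r ∈ R; and for each directed edge (u,v) ∈ E_H there is an undirected edge (u^ℓ, v^r). Then G has a perfect matching if and only if there is a directed path from s to t in H. -/

import Mathlib

/-- From any `r`-chain one can extract a duplicate-free `r`-chain with the
same endpoints, whose entries come from the original chain. -/
theorem exists_nodup_chain' {α : Type*} [DecidableEq α] {r : α → α → Prop} :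
    ∀ (l : List α) (a : α), List.Chain r a l →
      ∃ l' : List α, List.Chain r a l' ∧
        (a :: l').getLast (List.cons_ne_nil _ _) = (a :: l).getLast (List.cons_ne_nil _ _) ∧
        (a :: l').Nodup ∧ l' ⊆ l := by
  suffices H : ∀ (n : ℕ) (l : List α) (a : α), l.length ≤ n → List.Chain r a l →
      ∃ l' : List α, List.Chain r a l' ∧
        (a :: l').getLast (List.cons_ne_nil _ _) = (a :: l).getLast (List.cons_ne_nil _ _) ∧
        (a :: l').Nodup ∧ l' ⊆ l from
    fun l a h => H l.length l a le_rfl h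
  intro n
  induction n with
  | zero =>
    intro l a hl _
    have : l = [] := List.eq_nil_of_length_eq_zero (Nat.le_zero.1 hl)
    subst this
    exact ⟨[], List.Chain.nil, rfl, List.nodup_singleton a,
      fun x hx => absurd hx List.not_mem_nil⟩
  | succ n ih =>
    intro l a hl h
    by_cases ha : a ∈ l
    · obtain ⟨l1, l2, rfl⟩ := List.append_of_mem ha
      have h2 : List.Chain r a l2 := (List.isChain_cons_split.1 h).2
      have hl2 : l2.length ≤ n := by simp at hl; omega
      obtain ⟨l', h1', h2', h3', h4'⟩ := ih l2 a hl2 h2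
      refine ⟨l', h1', ?_, h3',
        fun x hx => List.mem_append.2 (Or.inr (List.mem_cons_of_mem _ (h4' hx)))⟩
      rw [h2']
      have he : a :: (l1 ++ a :: l2) = (a :: l1) ++ (a :: l2) := by simp
      rw [List.getLast_congr _ (by simp) he, List.getLast_append_of_ne_nil _ (List.cons_ne_nil _ _)]
    · cases l with
      | nil => exact ⟨[], List.Chain.nil, rfl, List.nodup_singleton a,
          fun x hx => absurd hx List.not_mem_nil⟩
      | cons b l' =>
        rcases List.chain_cons.1 h with ⟨hab, hb⟩
        have hl' : l'.length ≤ n := by simp at hl; omega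
        obtain ⟨l'', h1, h2, h3, h4⟩ := ih l' b hl' hb
        have hsub : b :: l'' ⊆ b :: l' := List.cons_subset_cons b h4
        refine ⟨b :: l'', List.chain_cons.2 ⟨hab, h1⟩, ?_, ?_, hsub⟩
        · rw [List.getLast_cons_cons, List.getLast_cons_cons]; exact h2
        · exact List.nodup_cons.2 ⟨fun hmem => ha (hsub hmem), h3⟩

/-- The split-vertex bipartite gadget `G` built from a directed graph
`(V, E)` with source `s` (no incoming edges) and sink `t` (no outgoing edges)
has a perfect matching iff there is a directed path from `s` to `t`.  The left
side is `V \ {t}`, the right side is `V \ {s}`; `u^ℓ` and `v^r` are adjacent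
iff `u = v ∉ {s, t}` (the split edge) or `(u, v) ∈ E`.  A perfect matching is a
bijection `M` from the left side to the right side matching adjacent vertices. -/
theorem stmt13 {V : Type*} [Fintype V] [DecidableEq V]
    (E : V → V → Prop) (s t : V) (hst : s ≠ t)
    (hs : ∀ v, ¬ E v s) (ht : ∀ v, ¬ E t v) :
    (∃ M : {v : V // v ≠ t} ≃ {v : V // v ≠ s},
        ∀ u : {v : V // v ≠ t},
          ((u : V) = ((M u : {v : V // v ≠ s}) : V) ∧ (u : V) ≠ s ∧ (u : V) ≠ t) ∨
            E (u : V) ((M u : {v : V // v ≠ s}) : V)) ↔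
      Relation.ReflTransGen E s t := by
  constructor
  · rintro ⟨M, hM⟩
    -- walk backwards from `t` along the matching
    set w : ℕ → V := fun n => Nat.rec t
      (fun _ p => if h : p ≠ s then ((M.symm ⟨p, h⟩ : {v : V // v ≠ t}) : V) else p) n with hw
    have hw0 : w 0 = t := rfl
    have hwsucc : ∀ k (h : w k ≠ s),
        w (k+1) = ((M.symm ⟨w k, h⟩ : {v : V // v ≠ t}) : V) := by
      intro k h
      show (if h' : w k ≠ s then ((M.symm ⟨w k, h'⟩ : {v : V // v ≠ t}) : V) else w k) = _
      rw [dif_pos h]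
    have hwne_t : ∀ k (h : w k ≠ s), w (k+1) ≠ t := by
      intro k h; rw [hwsucc k h]; exact (M.symm ⟨w k, h⟩).2
    have hM_w : ∀ k (h : w k ≠ s), ((M ⟨w (k+1), hwne_t k h⟩ : {v : V // v ≠ s}) : V) = w k := by
      intro k h
      have : (⟨w (k+1), hwne_t k h⟩ : {v : V // v ≠ t}) = M.symm ⟨w k, h⟩ :=
        Subtype.ext (hwsucc k h)
      rw [this, Equiv.apply_symm_apply]
    have hback : ∀ i j (hi : w i ≠ s) (hj : w j ≠ s), w (i+1) = w (j+1) → w i = w j := by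
      intro i j hi hj hEq
      have hsub : (⟨w (i+1), hwne_t i hi⟩ : {v : V // v ≠ t}) = ⟨w (j+1), hwne_t j hj⟩ :=
        Subtype.ext hEq
      calc w i = ((M ⟨w (i+1), hwne_t i hi⟩ : {v : V // v ≠ s}) : V) := (hM_w i hi).symm
        _ = ((M ⟨w (j+1), hwne_t j hj⟩ : {v : V // v ≠ s}) : V) := by rw [hsub]
        _ = w j := hM_w j hj
    have hex : ∃ k, w k = s := by
      by_contra hc
      push_neg at hc
      have key : ∀ i d, w i = w (i + d) → w 0 = w d := by
        intro i
        induction i with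
        | zero => intro d h; simpa using h
        | succ n ih =>
          intro d h
          apply ih
          apply hback n (n + d) (hc n) (hc (n + d))
          have : n + 1 + d = (n + d) + 1 := by omega
          rwa [this] at h
      have hdis : ∀ x y : ℕ, x < y → w x = w y → False := by
        intro x y hlt heq
        obtain ⟨d, rfl⟩ : ∃ d, y = x + (d + 1) := ⟨y - x - 1, by omega⟩
        have h0 : w 0 = w (d + 1) := key x (d + 1) heq
        exact hwne_t d (hc d) (h0.symm.trans hw0)
      obtain ⟨x, y, hxy, hfxy⟩ := Finite.exists_ne_map_eq_of_infinite w
      rcases lt_or_gt_of_ne hxy with h | h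
      · exact hdis x y h hfxy
      · exact hdis y x h hfxy.symm
    classical
    set k := Nat.find hex with hkdef
    have hk : w k = s := Nat.find_spec hex
    have hlt : ∀ j, j < k → w j ≠ s := fun j hj => Nat.find_min hex hj
    have hns : ∀ i, i < k → w (i+1) ≠ w i := by
      intro i
      induction i with
      | zero =>
        intro h0
        rw [hw0]
        exact hwne_t 0 (hlt 0 h0)
      | succ n ih =>
        intro hlt'
        have hn : n < k := by omega
        intro hEq
        exact ih hn ((hback n (n+1) (hlt n hn) (hlt (n+1) hlt') hEq.symm).symm)
    have hchain : ∀ j, j ≤ k → Relation.ReflTransGen E (w j) t := by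
      intro j
      induction j with
      | zero => intro _; rw [hw0]
      | succ n ih =>
        intro hle
        have hn : n < k := by omega
        rcases hM ⟨w (n+1), hwne_t n (hlt n hn)⟩ with ⟨heq, _, _⟩ | hE
        · rw [hM_w n (hlt n hn)] at heq
          exact absurd heq (hns n hn)
        · rw [hM_w n (hlt n hn)] at hE
          exact Relation.ReflTransGen.head hE (ih (le_of_lt hn))
    have := hchain k le_rfl
    rwa [hk] at this
  · intro hpath
    obtain ⟨l0, hc0, hl0⟩ := List.exists_isChain_cons_of_relationReflTransGen hpath
    obtain ⟨l, hcl, hlast, hnd, _⟩ := exists_nodup_chain' l0 s hc0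
    rw [hl0] at hlast
    set p : List V := s :: l with hpdef
    have hplen : 0 < p.length := by simp [hpdef]
    have hp0 : p.get ⟨0, hplen⟩ = s := rfl
    have hsmem : s ∈ p := List.mem_cons_self
    have htget : p.getLast (List.cons_ne_nil _ _) = t := hlast
    have hchain' : List.Chain' E p := hcl
    have hnext : ∀ v (hv : v ∈ p) (_ : v ≠ t), p.idxOf v + 1 < p.length := by
      intro v hv hvt
      have h1 : p.idxOf v < p.length := List.idxOf_lt_length_iff.2 hv
      rcases Nat.lt_or_ge (p.idxOf v + 1) p.length with h | h
      · exact h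
      · exfalso
        have hidx : p.idxOf v = p.length - 1 := by omega
        have : p.get ⟨p.idxOf v, h1⟩ = v := List.idxOf_get h1
        rw [List.getLast_eq_getElem] at htget
        apply hvt
        rw [← this, ← htget]
        simp only [List.get_eq_getElem]
        congr 1
    have hsne : ∀ v, v ∉ p → v ≠ s := fun v hv hvs => hv (hvs ▸ hsmem)
    have hgetne_s : ∀ (i : ℕ) (hi : i + 1 < p.length), p.get ⟨i + 1, hi⟩ ≠ s := by
      intro i hi hcon
      have : p.get ⟨i + 1, hi⟩ = p.get ⟨0, hplen⟩ := by rw [hp0]; exact hcon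
      have h0 := congrArg Fin.val ((hnd.get_inj_iff).1 this)
      simp at h0
    let f : {v : V // v ≠ t} → {v : V // v ≠ s} := fun u =>
      if hu : (u : V) ∈ p then
        ⟨p.get ⟨p.idxOf (u : V) + 1, hnext _ hu u.2⟩, hgetne_s _ _⟩
      else ⟨(u : V), hsne _ hu⟩
    have hinj : Function.Injective f := by
      intro u1 u2 h
      by_cases h1 : (u1 : V) ∈ p <;> by_cases h2 : (u2 : V) ∈ p
      · simp only [f, dif_pos h1, dif_pos h2] at h
        have h' := congrArg Subtype.val h
        have := (hnd.get_inj_iff).1 h'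
        simp only [Fin.mk.injEq, Nat.add_right_cancel_iff] at this
        apply Subtype.ext
        rw [← List.idxOf_get (List.idxOf_lt_length_iff.2 h1),
          ← List.idxOf_get (List.idxOf_lt_length_iff.2 h2)]
        simp only [List.get_eq_getElem]
        congr 1
      · exfalso
        simp only [f, dif_pos h1, dif_neg h2] at h
        have h' := congrArg Subtype.val h
        exact h2 (h' ▸ List.get_mem p _)
      · exfalso
        simp only [f, dif_neg h1, dif_pos h2] at h
        have h' := congrArg Subtype.val h
        exact h1 (h'.symm ▸ List.get_mem p _)
      · simp only [f, dif_neg h1, dif_neg h2] at h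
        exact Subtype.ext (Subtype.mk_eq_mk.1 h)
    have hcard : Fintype.card {v : V // v ≠ t} = Fintype.card {v : V // v ≠ s} := by
      have h1 : Fintype.card {v : V // v ≠ t} = Fintype.card V - 1 := by
        have := Fintype.card_subtype_compl (fun v : V => v = t)
        simp only [Fintype.card_subtype_eq] at this
        convert this using 2
      have h2 : Fintype.card {v : V // v ≠ s} = Fintype.card V - 1 := by
        have := Fintype.card_subtype_compl (fun v : V => v = s)
        simp only [Fintype.card_subtype_eq] at this
        convert this using 2
      rw [h1, h2]
    have hbij : Function.Bijective f :=
      (Fintype.bijective_iff_injective_and_card f).2 ⟨hinj, hcard⟩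
    refine ⟨Equiv.ofBijective f hbij, ?_⟩
    intro u
    have hMu : ((Equiv.ofBijective f hbij u : {v : V // v ≠ s}) : V) = ((f u : {v : V // v ≠ s}) : V) := rfl
    rw [hMu]
    by_cases hu : (u : V) ∈ p
    · right
      simp only [f, dif_pos hu]
      have hiu : p.idxOf (u : V) < p.length := List.idxOf_lt_length_iff.2 hu
      have hE := List.isChain_iff_getElem.1 hchain' (p.idxOf (u : V)) (by
        have := hnext _ hu u.2; omega)
      have : p.get ⟨p.idxOf (u : V), hiu⟩ = (u : V) := List.idxOf_get hiu
      rw [List.get_eq_getElem] at this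
      rw [this] at hE
      exact hE
    · left
      simp only [f, dif_neg hu]
      exact ⟨trivial, hsne _ hu, u.2⟩
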